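/- Let (S, ω) be a finite-dimensional complex symplectic space and W ⊆ S a co-isotropic subspace (W° ⊆ W). If L ⊆ S is a Lagrangian subspace (L° = L), then the image of L ∩ W under the quotient map W → W / W° is a Lagrangian subspace of the quotient W / W° equipped with the symplectic form induced by ω. -/

import Mathlib

/-- The annihilator `V° = {x | ω(x, y) = 0 for all y ∈ V}` of a subspace `V` with
respect to a sesquilinear form `ω` (conjugate-linear in the first argument). -/
def omegaAnnihilator {S : Type*} [AddCommGroup S] [Module ℂ S]
    (ω : S →ₗ⋆[ℂ] S →ₗ[ℂ] ℂ) (V : Submodule ℂ S) : Submodule ℂ S where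
  carrier := {x | ∀ y ∈ V, ω x y = 0}
  zero_mem' := by intro y _; simp
  add_mem' := by
    intro a b ha hb y hy
    simp [map_add, LinearMap.add_apply, ha y hy, hb y hy]
  smul_mem' := by
    intro c a ha y hy
    simp [LinearMap.map_smulₛₗ, LinearMap.smul_apply, smul_eq_mul, ha y hy]

section aux
variable {S : Type*} [AddCommGroup S] [Module ℂ S]
  (ω : S →ₗ⋆[ℂ] S →ₗ[ℂ] ℂ)

lemma mem_omegaAnn {V : Submodule ℂ S} {x : S} :
    x ∈ omegaAnnihilator ω V ↔ ∀ y ∈ V, ω x y = 0 := Iff.rfl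

/-- The real bilinear form `Re ω`. -/
noncomputable def realForm : LinearMap.BilinForm ℝ S :=
  LinearMap.mk₂ ℝ (fun x y => (ω x y).re)
    (fun x x' y => by simp)
    (fun r x y => by
      rw [← algebraMap_smul ℂ r x, LinearMap.map_smulₛₗ]
      simp [Complex.conj_ofReal, smul_eq_mul, Complex.mul_re])
    (fun x y y' => by simp)
    (fun r x y => by
      rw [← algebraMap_smul ℂ r y]
      simp [Complex.smul_re])

lemma realForm_apply (x y : S) : realForm ω x y = (ω x y).re := rfl

variable (hskew : ∀ x y : S, ω x y = -(starRingEnd ℂ) (ω y x))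

include hskew in
lemma realForm_flip (x y : S) : realForm ω y x = -(realForm ω x y) := by
  simp [realForm_apply, hskew y x, Complex.neg_re, Complex.conj_re]

include hskew in
lemma realForm_isRefl : (realForm ω).IsRefl := by
  intro x y h
  rw [realForm_flip ω hskew, h, neg_zero]

include hskew in
lemma ann_eq_orthogonal (V : Submodule ℂ S) :
    (omegaAnnihilator ω V).restrictScalars ℝ
      = (realForm ω).orthogonal (V.restrictScalars ℝ) := by
  ext x
  simp only [Submodule.restrictScalars_mem, LinearMap.BilinForm.mem_orthogonal_iff]
  constructor
  · intro h y hy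
    have : ω x y = 0 := h y hy
    show realForm ω y x = 0
    rw [realForm_flip ω hskew, realForm_apply, this]
    simp
  · intro h y hy
    have h1 : (ω y x).re = 0 := h y hy
    have h2 : (ω y x).im = 0 := by
      have : (ω (Complex.I • y) x).re = 0 := h (Complex.I • y) (Submodule.smul_mem _ _ hy)
      rw [LinearMap.map_smulₛₗ] at this
      simpa [Complex.mul_re] using this
    have : ω y x = 0 := Complex.ext h1 h2
    rw [hskew x y, this]
    simp

include hskew in
lemma realForm_nondeg (hnd : ∀ x : S, (∀ y : S, ω x y = 0) → x = 0) :
    (realForm ω).Nondegenerate := by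
  refine (realForm_isRefl ω hskew).nondegenerate_iff_separatingLeft.2 ?_
  intro x hx
  apply hnd
  intro y
  have h1 : (ω x y).re = 0 := hx y
  have h2 : (ω x y).im = 0 := by
    have := hx (Complex.I • y)
    rw [realForm_apply, map_smul] at this
    simpa [Complex.mul_re] using this
  exact Complex.ext h1 h2

end aux

/-- Linear symplectic reduction: let `(S, ω)` be a finite-dimensional complex
symplectic space, `W` a co-isotropic subspace (`W° ⊆ W`) and `L` a Lagrangian
subspace (`L° = L`).  Then the image of `L ∩ W` under the quotient map
`W → W / W°` is Lagrangian in the reduced space `W / W°` with the form induced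
by `ω`.  Since the induced form is `ω̇([x],[y]) = ω(x,y)` and the annihilator of
the image of `L ∩ W` in `W/W°` consists of the classes `[x]`, `x ∈ W`, with
`ω(x, y) = 0` for all `y ∈ L ∩ W`, while the image itself consists of the
classes of elements of `(L ∩ W) + W°`, this says precisely: for every `x ∈ W`,
`(∀ y ∈ L ⊓ W, ω x y = 0) ↔ x ∈ (L ⊓ W) ⊔ W°`. -/
theorem stmt_5 {S : Type*} [AddCommGroup S] [Module ℂ S] [FiniteDimensional ℂ S]
    (ω : S →ₗ⋆[ℂ] S →ₗ[ℂ] ℂ)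
    (hskew : ∀ x y : S, ω x y = -(starRingEnd ℂ) (ω y x))
    (hnd : ∀ x : S, (∀ y : S, ω x y = 0) → x = 0)
    (W L : Submodule ℂ S)
    (hW : omegaAnnihilator ω W ≤ W)
    (hL : omegaAnnihilator ω L = L) :
    ∀ x ∈ W, ((∀ y ∈ L ⊓ W, ω x y = 0) ↔ x ∈ (L ⊓ W) ⊔ omegaAnnihilator ω W) := by
  have hrefl := realForm_isRefl ω hskew
  have hndR := realForm_nondeg ω hskew hnd
  -- double annihilator
  have hdouble : ∀ V : Submodule ℂ S,
      omegaAnnihilator ω (omegaAnnihilator ω V) = V := by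
    intro V
    have : (omegaAnnihilator ω (omegaAnnihilator ω V)).restrictScalars ℝ
        = V.restrictScalars ℝ := by
      rw [ann_eq_orthogonal ω hskew, ann_eq_orthogonal ω hskew,
        LinearMap.BilinForm.orthogonal_orthogonal hndR hrefl]
    exact Submodule.restrictScalars_injective ℝ ℂ S this
  -- annihilator of sup
  have hsup : ∀ U V : Submodule ℂ S,
      omegaAnnihilator ω (U ⊔ V) = omegaAnnihilator ω U ⊓ omegaAnnihilator ω V := by
    intro U V
    apply le_antisymm
    · intro x hx
      exact ⟨fun y hy => hx y (Submodule.mem_sup_left hy),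
             fun y hy => hx y (Submodule.mem_sup_right hy)⟩
    · rintro x ⟨hx1, hx2⟩ y hy
      obtain ⟨u, hu, v, hv, rfl⟩ := Submodule.mem_sup.1 hy
      rw [map_add, hx1 u hu, hx2 v hv, add_zero]
  -- annihilator of inf
  have hinf : omegaAnnihilator ω (L ⊓ W)
      = L ⊔ omegaAnnihilator ω W := by
    have : L ⊓ W = omegaAnnihilator ω (L ⊔ omegaAnnihilator ω W) := by
      rw [hsup, hdouble, hL]
    rw [this, hdouble]
  intro x hxW
  constructor
  · intro h
    have hx : x ∈ omegaAnnihilator ω (L ⊓ W) := h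
    rw [hinf] at hx
    obtain ⟨l, hl, w, hw, rfl⟩ := Submodule.mem_sup.1 hx
    have hlW : l ∈ W := by
      have hwW : w ∈ W := hW hw
      have : l = (l + w) - w := by abel
      rw [this]
      exact Submodule.sub_mem _ hxW hwW
    exact Submodule.mem_sup.2 ⟨l, ⟨hl, hlW⟩, w, hw, rfl⟩
  · intro hx y hy
    obtain ⟨a, ha, b, hb, rfl⟩ := Submodule.mem_sup.1 hx
    have h1 : ω a y = 0 := by
      have haL : a ∈ omegaAnnihilator ω L := by rw [hL]; exact ha.1
      exact haL y hy.1
    have h2 : ω b y = 0 := hb y hy.2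
    rw [map_add, LinearMap.add_apply, h1, h2, add_zero]
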